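/- Let X be a Riccati solution and x₀ ∈ ℝ^n. If (u*, x*) is an admissible pair with initial state x₀ that obeys the feedback law u*(t) = −(1/λ)·B̂(t)ᵀ X(t) M(t) x*(t) for all t ∈ [0,T], then J(u*, x*) = (1/2)·x₀ᵀ M(0)ᵀ X(0) M(0) x₀, and J(u*, x*) ≤ J(u, x) for every admissible pair (u, x) with initial state x₀; i.e., the Riccati feedback control solves the linear-quadratic regulator problem. -/

import Mathlib

open Matrix Set MeasureTheory

noncomputable section

/-- Entrywise continuity on a set for matrix-valued functions of one real variable. -/
def MatContOn {a b : ℕ} (f : ℝ → Matrix (Fin a) (Fin b) ℝ) (s : Set ℝ) : Prop :=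
  ∀ i j, ContinuousOn (fun t => f t i j) s

/-- The quadratic cost functional `J(u, x)`, with Euclidean norms written via dot products. -/
def cost {n m r : ℕ} (lam T : ℝ) (C : ℝ → Matrix (Fin r) (Fin n) ℝ)
    (u : ℝ → Fin m → ℝ) (x : ℝ → Fin n → ℝ) : ℝ :=
  (1 / 2) * ∫ t in (0:ℝ)..T,
    ((C t).mulVec (x t) ⬝ᵥ (C t).mulVec (x t) + lam * (u t ⬝ᵥ u t))

/-- An admissible control/state pair with initial state `x₀`: `u` continuous, `x`
differentiable on `[0, T]` with `M(t) x'(t) = A(t) x(t) + B(t) u(t)` and `x(0) = x₀`. -/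
structure Admissible {n m : ℕ} (T : ℝ) (M A : ℝ → Matrix (Fin n) (Fin n) ℝ)
    (B : ℝ → Matrix (Fin n) (Fin m) ℝ) (x₀ : Fin n → ℝ)
    (u : ℝ → Fin m → ℝ) (x : ℝ → Fin n → ℝ) : Prop where
  u_cont : ∀ i, ContinuousOn (fun t => u t i) (Icc 0 T)
  dyn : ∃ x' : ℝ → Fin n → ℝ,
    (∀ t ∈ Icc (0:ℝ) T, ∀ i, HasDerivWithinAt (fun s => x s i) (x' t i) (Icc (0:ℝ) T) t) ∧
    (∀ t ∈ Icc (0:ℝ) T, (M t).mulVec (x' t) = (A t).mulVec (x t) + (B t).mulVec (u t))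
  init : x 0 = x₀

/-- A solution of the generalized differential Riccati equation: continuous, symmetric,
`t ↦ M(t)ᵀ X(t) M(t)` differentiable on `[0, T]`, terminal value `X(T) = 0`, and the
generalized DRE holds on `[0, T]`. -/
structure RiccatiSol {n m r : ℕ} (T lam : ℝ) (M A : ℝ → Matrix (Fin n) (Fin n) ℝ)
    (B : ℝ → Matrix (Fin n) (Fin m) ℝ) (C : ℝ → Matrix (Fin r) (Fin n) ℝ)
    (X : ℝ → Matrix (Fin n) (Fin n) ℝ) : Prop where
  cont : MatContOn X (Icc 0 T)
  symm : ∀ t ∈ Icc (0:ℝ) T, (X t)ᵀ = X t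
  terminal : X T = 0
  riccati : ∃ Y : ℝ → Matrix (Fin n) (Fin n) ℝ,
    (∀ t ∈ Icc (0:ℝ) T, ∀ i j,
      HasDerivWithinAt (fun s => ((M s)ᵀ * X s * M s) i j) (Y t i j) (Icc (0:ℝ) T) t) ∧
    (∀ t ∈ Icc (0:ℝ) T,
      -(Y t) = (C t)ᵀ * C t + (A t)ᵀ * X t * M t + (M t)ᵀ * X t * A t
        - (1 / lam) • ((M t)ᵀ * X t * B t * (B t)ᵀ * X t * M t))

lemma contOn_dotProduct {k : ℕ} {s : Set ℝ} {f g : ℝ → Fin k → ℝ}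
    (hf : ∀ i, ContinuousOn (fun t => f t i) s) (hg : ∀ i, ContinuousOn (fun t => g t i) s) :
    ContinuousOn (fun t => f t ⬝ᵥ g t) s := by
  simp only [dotProduct]
  exact continuousOn_finset_sum _ fun i _ => (hf i).mul (hg i)

lemma contOn_mulVec {a b : ℕ} {s : Set ℝ} {P : ℝ → Matrix (Fin a) (Fin b) ℝ}
    {f : ℝ → Fin b → ℝ} (hP : MatContOn P s) (hf : ∀ i, ContinuousOn (fun t => f t i) s) :
    ∀ i, ContinuousOn (fun t => (P t).mulVec (f t) i) s := by
  intro i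
  simp only [mulVec, dotProduct]
  exact continuousOn_finset_sum _ fun j _ => (hP i j).mul (hf j)

lemma matContOn_mul {a b c : ℕ} {s : Set ℝ} {P : ℝ → Matrix (Fin a) (Fin b) ℝ}
    {Q : ℝ → Matrix (Fin b) (Fin c) ℝ} (hP : MatContOn P s) (hQ : MatContOn Q s) :
    MatContOn (fun t => P t * Q t) s := by
  intro i j
  simp only [Matrix.mul_apply]
  exact continuousOn_finset_sum _ fun k _ => (hP i k).mul (hQ k j)

lemma matContOn_transpose {a b : ℕ} {s : Set ℝ} {P : ℝ → Matrix (Fin a) (Fin b) ℝ}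
    (hP : MatContOn P s) : MatContOn (fun t => (P t)ᵀ) s := fun i j => hP j i

lemma key_cost {n m r : ℕ} (T lam : ℝ) (hT : 0 < T) (hlam : 0 < lam)
    (M A : ℝ → Matrix (Fin n) (Fin n) ℝ) (B : ℝ → Matrix (Fin n) (Fin m) ℝ)
    (C : ℝ → Matrix (Fin r) (Fin n) ℝ)
    (hM : MatContOn M (Icc 0 T)) (hB : MatContOn B (Icc 0 T)) (hC : MatContOn C (Icc 0 T))
    (X : ℝ → Matrix (Fin n) (Fin n) ℝ) (hX : RiccatiSol T lam M A B C X)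
    (x₀ : Fin n → ℝ) (u : ℝ → Fin m → ℝ) (x : ℝ → Fin n → ℝ)
    (h : Admissible T M A B x₀ u x) :
    cost lam T C u x = (1 / 2) * (x₀ ⬝ᵥ ((M 0)ᵀ * X 0 * M 0).mulVec x₀)
      + (lam / 2) * ∫ t in (0:ℝ)..T,
          ((u t + (1 / lam) • ((B t)ᵀ * X t * M t).mulVec (x t)) ⬝ᵥ
           (u t + (1 / lam) • ((B t)ᵀ * X t * M t).mulVec (x t))) := by
  obtain ⟨x', hx'd, hdyn⟩ := h.dyn
  obtain ⟨Y, hYd, hric⟩ := hX.riccati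
  set N : ℝ → Matrix (Fin n) (Fin n) ℝ := fun t => (M t)ᵀ * X t * M t with hN
  set w : ℝ → Fin m → ℝ :=
    fun t => u t + (1 / lam) • ((B t)ᵀ * X t * M t).mulVec (x t) with hw
  set F : ℝ → ℝ :=
    fun t => (C t).mulVec (x t) ⬝ᵥ (C t).mulVec (x t) + lam * (u t ⬝ᵥ u t) with hF
  set g : ℝ → ℝ := fun t => lam * (w t ⬝ᵥ w t) - F t with hg
  set v : ℝ → ℝ := fun t => x t ⬝ᵥ (N t).mulVec (x t) with hv
  -- continuity of x coordinates
  have hxc : ∀ i, ContinuousOn (fun t => x t i) (Icc 0 T) :=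
    fun i t ht => (hx'd t ht i).continuousWithinAt
  have huc := h.u_cont
  -- continuity of the matrix Z = BᵀXM
  have hZc : MatContOn (fun t => (B t)ᵀ * X t * M t) (Icc 0 T) :=
    matContOn_mul (matContOn_mul (matContOn_transpose hB) hX.cont) hM
  -- z and w coords continuous
  have hzc : ∀ i, ContinuousOn (fun t => ((B t)ᵀ * X t * M t).mulVec (x t) i) (Icc 0 T) :=
    contOn_mulVec hZc hxc
  have hwc : ∀ i, ContinuousOn (fun t => w t i) (Icc 0 T) := by
    intro i
    simp only [hw, Pi.add_apply, Pi.smul_apply, smul_eq_mul]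
    have := ((hzc i).fun_const_smul (1/lam))
    simp only [smul_eq_mul] at this
    exact (huc i).add this
  have hwwc : ContinuousOn (fun t => w t ⬝ᵥ w t) (Icc 0 T) := contOn_dotProduct hwc hwc
  have hFc : ContinuousOn F (Icc 0 T) := by
    apply ContinuousOn.add
    · exact contOn_dotProduct (contOn_mulVec hC hxc) (contOn_mulVec hC hxc)
    · exact (contOn_dotProduct huc huc).const_smul lam
  have hgc : ContinuousOn g (Icc 0 T) := (hwwc.const_smul lam).sub hFc
  -- derivative of v on Icc
  have hvd : ∀ t ∈ Icc (0:ℝ) T, HasDerivWithinAt v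
      (x' t ⬝ᵥ (N t).mulVec (x t) + x t ⬝ᵥ (Y t).mulVec (x t)
        + x t ⬝ᵥ (N t).mulVec (x' t)) (Icc 0 T) t := by
    intro t ht
    have hsum : HasDerivWithinAt
        (fun s => ∑ i, ∑ j, x s i * (N s i j * x s j))
        (∑ i, ∑ j, (x' t i * (N t i j * x t j)
          + x t i * (Y t i j * x t j + N t i j * x' t j))) (Icc 0 T) t := by
      apply HasDerivWithinAt.fun_sum
      intro i _
      apply HasDerivWithinAt.fun_sum
      intro j _
      exact (hx'd t ht i).mul ((hYd t ht i j).mul (hx'd t ht j))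
    have hfun : v = fun s => ∑ i, ∑ j, x s i * (N s i j * x s j) := by
      funext s
      simp only [hv, dotProduct, mulVec, Finset.mul_sum]
    have hval : (∑ i, ∑ j, (x' t i * (N t i j * x t j)
          + x t i * (Y t i j * x t j + N t i j * x' t j)))
        = x' t ⬝ᵥ (N t).mulVec (x t) + x t ⬝ᵥ (Y t).mulVec (x t)
          + x t ⬝ᵥ (N t).mulVec (x' t) := by
      simp only [dotProduct, mulVec, Finset.mul_sum, mul_add, Finset.sum_add_distrib]
      ring
    rw [hfun, ← hval]
    exact hsum
  -- the derivative equals g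
  have hDg : ∀ t ∈ Icc (0:ℝ) T,
      (x' t ⬝ᵥ (N t).mulVec (x t) + x t ⬝ᵥ (Y t).mulVec (x t)
        + x t ⬝ᵥ (N t).mulVec (x' t)) = g t := by
    intro t ht
    have hs := hX.symm t ht
    have hNt : (N t)ᵀ = N t := by
      simp only [hN, transpose_mul, transpose_transpose, hs, Matrix.mul_assoc]
    have hYt : Y t = -((C t)ᵀ * C t + (A t)ᵀ * X t * M t + (M t)ᵀ * X t * A t
        - (1 / lam) • ((M t)ᵀ * X t * B t * (B t)ᵀ * X t * M t)) := by
      rw [← hric t ht, neg_neg]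
    set p := x t
    set q := x' t
    set uu := u t
    set z := ((B t)ᵀ * X t * M t).mulVec p with hz
    -- e1 : symmetry
    have e1 : q ⬝ᵥ (N t).mulVec p = p ⬝ᵥ (N t).mulVec q := by
      rw [dotProduct_mulVec, ← mulVec_transpose, hNt, dotProduct_comm, dotProduct_mulVec,
        ← mulVec_transpose, hNt]
    -- transpose of MᵀXB
    have htr : ((M t)ᵀ * X t * B t)ᵀ = (B t)ᵀ * X t * M t := by
      simp only [transpose_mul, transpose_transpose, hs, Matrix.mul_assoc]
    -- e2 : dynamics substitution
    have e2 : p ⬝ᵥ (N t).mulVec q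
        = p ⬝ᵥ ((M t)ᵀ * X t * A t).mulVec p + z ⬝ᵥ uu := by
      have : (N t).mulVec q = ((M t)ᵀ * X t).mulVec ((M t).mulVec q) := by
        rw [mulVec_mulVec]
      rw [this, hdyn t ht, mulVec_add, dotProduct_add, mulVec_mulVec, mulVec_mulVec]
      congr 1
      rw [dotProduct_mulVec, ← mulVec_transpose, htr]
    -- e3 : square term
    have e3 : p ⬝ᵥ ((M t)ᵀ * X t * B t * (B t)ᵀ * X t * M t).mulVec p = z ⬝ᵥ z := by
      have : (M t)ᵀ * X t * B t * (B t)ᵀ * X t * M t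
          = ((M t)ᵀ * X t * B t) * ((B t)ᵀ * X t * M t) := by
        simp only [Matrix.mul_assoc]
      rw [this, ← mulVec_mulVec, dotProduct_mulVec, ← mulVec_transpose, htr, hz]
    -- e4 : transpose symmetry AᵀXM
    have e4 : p ⬝ᵥ ((A t)ᵀ * X t * M t).mulVec p
        = p ⬝ᵥ ((M t)ᵀ * X t * A t).mulVec p := by
      rw [dotProduct_mulVec, ← mulVec_transpose]
      have : ((A t)ᵀ * X t * M t)ᵀ = (M t)ᵀ * X t * A t := by
        simp only [transpose_mul, transpose_transpose, hs, Matrix.mul_assoc]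
      rw [this, dotProduct_comm]
    -- e5 : CᵀC
    have e5 : p ⬝ᵥ ((C t)ᵀ * C t).mulVec p = (C t).mulVec p ⬝ᵥ (C t).mulVec p := by
      rw [← mulVec_mulVec, dotProduct_mulVec, ← mulVec_transpose, transpose_transpose]
    -- Y term
    have eY : p ⬝ᵥ (Y t).mulVec p
        = -((C t).mulVec p ⬝ᵥ (C t).mulVec p) - 2 * (p ⬝ᵥ ((M t)ᵀ * X t * A t).mulVec p)
          + (1 / lam) * (z ⬝ᵥ z) := by
      rw [hYt]
      simp only [Matrix.neg_mulVec, dotProduct_neg, Matrix.sub_mulVec, Matrix.add_mulVec,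
        dotProduct_sub, dotProduct_add, Matrix.smul_mulVec, dotProduct_smul,
        smul_eq_mul]
      rw [e3, e4, e5]
      ring
    -- w ⬝ w expansion
    have eW : w t ⬝ᵥ w t = uu ⬝ᵥ uu + (2 / lam) * (z ⬝ᵥ uu) + (1 / lam)^2 * (z ⬝ᵥ z) := by
      simp only [hw, add_dotProduct, dotProduct_add, smul_dotProduct, dotProduct_smul,
        smul_eq_mul]
      have : z ⬝ᵥ uu = uu ⬝ᵥ z := dotProduct_comm _ _
      rw [← hz]
      ring_nf
      rw [dotProduct_comm uu z]
      ring
    rw [e1, e2, eY, hg]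
    simp only [hF, eW]
    rw [e5.symm]
    field_simp
    ring
  -- FTC
  have hderiv : ∀ t ∈ Ioo (0:ℝ) T, HasDerivWithinAt v (g t) (Ioi t) t := by
    intro t ht
    have ht' : t ∈ Icc (0:ℝ) T := ⟨ht.1.le, ht.2.le⟩
    have := (hvd t ht').hasDerivAt (Icc_mem_nhds ht.1 ht.2)
    rw [hDg t ht'] at this
    exact this.hasDerivWithinAt
  have hvc : ContinuousOn v (Icc 0 T) := by
    have hNc : MatContOn N (Icc 0 T) := fun i j t ht => (hYd t ht i j).continuousWithinAt
    exact contOn_dotProduct hxc (contOn_mulVec hNc hxc)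
  have hgint : IntervalIntegrable g volume 0 T :=
    (hgc.mono (by rw [uIcc_of_le hT.le])).intervalIntegrable
  have hftc : ∫ t in (0:ℝ)..T, g t = v T - v 0 :=
    intervalIntegral.integral_eq_sub_of_hasDeriv_right_of_le hT.le hvc hderiv hgint
  have hvT : v T = 0 := by
    simp [hv, hN, hX.terminal]
  have hv0 : v 0 = x₀ ⬝ᵥ ((M 0)ᵀ * X 0 * M 0).mulVec x₀ := by
    simp [hv, hN, h.init]
  have hwint : IntervalIntegrable (fun t => w t ⬝ᵥ w t) volume 0 T :=
    (hwwc.mono (by rw [uIcc_of_le hT.le])).intervalIntegrable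
  have hFint : IntervalIntegrable F volume 0 T :=
    (hFc.mono (by rw [uIcc_of_le hT.le])).intervalIntegrable
  have hsplit : ∫ t in (0:ℝ)..T, F t
      = lam * (∫ t in (0:ℝ)..T, w t ⬝ᵥ w t) - ∫ t in (0:ℝ)..T, g t := by
    rw [← intervalIntegral.integral_const_mul, ← intervalIntegral.integral_sub
      (hwint.const_mul lam) hgint]
    congr 1
    funext t
    simp only [hg]
    ring
  have : cost lam T C u x = (1 / 2) * ∫ t in (0:ℝ)..T, F t := rfl
  rw [this, hsplit, hftc, hvT, hv0]
  ring


/-- If `(u*, x*)` is an admissible pair obeying the Riccati feedback law, then its cost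
equals `(1/2) x₀ᵀ M(0)ᵀ X(0) M(0) x₀`, and it is optimal among all admissible pairs with
the same initial state. -/
theorem riccati_feedback_solves_LQR {n m r : ℕ} (T lam : ℝ) (hT : 0 < T) (hlam : 0 < lam)
    (M A : ℝ → Matrix (Fin n) (Fin n) ℝ) (B : ℝ → Matrix (Fin n) (Fin m) ℝ)
    (C : ℝ → Matrix (Fin r) (Fin n) ℝ)
    (hM : MatContOn M (Icc 0 T)) (hA : MatContOn A (Icc 0 T))
    (hB : MatContOn B (Icc 0 T)) (hC : MatContOn C (Icc 0 T))
    (X : ℝ → Matrix (Fin n) (Fin n) ℝ) (hX : RiccatiSol T lam M A B C X)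
    (x₀ : Fin n → ℝ) (ustar : ℝ → Fin m → ℝ) (xstar : ℝ → Fin n → ℝ)
    (hadm : Admissible T M A B x₀ ustar xstar)
    (hfb : ∀ t ∈ Icc (0:ℝ) T,
      ustar t = -((1 / lam) • ((B t)ᵀ * X t * M t).mulVec (xstar t))) :
    cost lam T C ustar xstar = (1 / 2) * (x₀ ⬝ᵥ ((M 0)ᵀ * X 0 * M 0).mulVec x₀)
      ∧ ∀ (u : ℝ → Fin m → ℝ) (x : ℝ → Fin n → ℝ), Admissible T M A B x₀ u x →
          cost lam T C ustar xstar ≤ cost lam T C u x := by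
  have hstar := key_cost T lam hT hlam M A B C hM hB hC X hX x₀ ustar xstar hadm
  have hzero : (∫ t in (0:ℝ)..T,
      ((ustar t + (1 / lam) • ((B t)ᵀ * X t * M t).mulVec (xstar t)) ⬝ᵥ
       (ustar t + (1 / lam) • ((B t)ᵀ * X t * M t).mulVec (xstar t)))) = 0 := by
    rw [intervalIntegral.integral_congr (g := fun _ => (0:ℝ))
      (fun t ht => by
        rw [uIcc_of_le hT.le] at ht
        simp [hfb t ht])]
    simp
  constructor
  · rw [hstar, hzero]; ring
  · intro u x hux
    have h2 := key_cost T lam hT hlam M A B C hM hB hC X hX x₀ u x hux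
    rw [hstar, hzero, h2]
    have hnn : (0:ℝ) ≤ ∫ t in (0:ℝ)..T,
        ((u t + (1 / lam) • ((B t)ᵀ * X t * M t).mulVec (x t)) ⬝ᵥ
         (u t + (1 / lam) • ((B t)ᵀ * X t * M t).mulVec (x t))) := by
      apply intervalIntegral.integral_nonneg hT.le
      intro t _
      exact Finset.sum_nonneg fun i _ => mul_self_nonneg _
    nlinarith
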